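/- Suppose f satisfies conditions (i), (ii) and (iii), and for u ∈ C(Ω̄) let L(u) : C(Ω̄) → L^p(Ω) denote the bounded linear operator (L(u)v)(x) := ∂_u f(x, u(x)) v(x). Then the map u ↦ L(u) is continuous from C(Ω̄) into the Banach space of bounded linear operators from C(Ω̄) to L^p(Ω) equipped with the operator norm. -/

import Mathlib

open MeasureTheory ENNReal Classical

/-- The extension by zero of a continuous function on `closure Ω` to the whole space. -/
noncomputable def extendC {N : ℕ} (Ω : Set (Fin N → ℝ)) (u : C(closure Ω, ℝ)) :
    (Fin N → ℝ) → ℝ :=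
  fun x => if hx : x ∈ closure Ω then u ⟨x, hx⟩ else 0

/-- Under conditions (i), (ii) and (iii), the map `u ↦ L(u)`, where
`(L(u)v)(x) = ∂_u f(x, u(x)) v(x)`, is continuous from `C(Ω̄)` into the space of bounded
linear operators `C(Ω̄) → L^p(Ω)` with the operator norm. -/
theorem superposition_derivative_continuous
    {N : ℕ} (Ω : Set (Fin N → ℝ)) (hΩo : IsOpen Ω) (hΩb : Bornology.IsBounded Ω)
    [CompactSpace (closure Ω)]
    (f f' : (Fin N → ℝ) → ℝ → ℝ) (p : ℝ≥0∞) (hp : 2 ≤ p) [Fact (1 ≤ p)]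
    -- (i): a.e. differentiability in `u`, measurability in `x`
    (hdiff : ∀ᵐ x ∂(volume.restrict Ω), ∀ y : ℝ, HasDerivAt (f x) (f' x y) y)
    (hmeas : ∀ y : ℝ, AEMeasurable (fun x => f x y) (volume.restrict Ω))
    -- (ii) and (iii): local `L^p` domination and uniform continuity relative to `g_K`
    (hbound : ∀ K : Set ℝ, IsCompact K → ∃ g : (Fin N → ℝ) → ℝ,
      MemLp g p (volume.restrict Ω) ∧
      (∀ᵐ x ∂(volume.restrict Ω), ∀ y ∈ K, |f x y| + |f' x y| ≤ g x) ∧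
      (∀ ε > (0:ℝ), ∃ δ > (0:ℝ), ∀ᵐ x ∂(volume.restrict Ω), ∀ y ∈ K, ∀ z ∈ K,
        |y - z| ≤ δ → |f x y - f x z| + |f' x y - f' x z| ≤ ε * g x))
    -- the operator family `L`
    (L : C(closure Ω, ℝ) → (C(closure Ω, ℝ) →L[ℝ] Lp ℝ p (volume.restrict Ω)))
    (hL : ∀ u v : C(closure Ω, ℝ),
      ⇑(L u v) =ᵐ[volume.restrict Ω]
        fun x => f' x (extendC Ω u x) * extendC Ω v x) :
    Continuous L := by
  refine (Metric.continuous_iff (f := L)).2 fun u₀ ε hε => ?_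
  set M : ℝ := ‖u₀‖ + 1 with hM
  obtain ⟨g, hg_mem, _, hg_unif⟩ := hbound (Set.Icc (-M) M) isCompact_Icc
  set G : ℝ := (eLpNorm g p (volume.restrict Ω)).toReal with hG
  have hG0 : 0 ≤ G := ENNReal.toReal_nonneg
  set ε' : ℝ := ε / (2 * (G + 1)) with hε'def
  have hε' : 0 < ε' := by positivity
  obtain ⟨δ, hδpos, hδae⟩ := hg_unif ε' hε'
  refine ⟨min δ 1, lt_min hδpos one_pos, fun u hu => ?_⟩
  have hud : dist u u₀ < δ := lt_of_lt_of_le hu (min_le_left _ _)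
  have hu1 : dist u u₀ ≤ 1 := le_of_lt (lt_of_lt_of_le hu (min_le_right _ _))
  have hdef : dist (L u) (L u₀) = ‖L u - L u₀‖ := dist_eq_norm (L u) (L u₀)
  rw [hdef]
  have hop : ‖L u - L u₀‖ ≤ ε' * G := by
    refine ContinuousLinearMap.opNorm_le_bound _ (by positivity) fun v => ?_
    set F : (Fin N → ℝ) → ℝ := fun x =>
      f' x (extendC Ω u x) * extendC Ω v x - f' x (extendC Ω u₀ x) * extendC Ω v x with hF
    have hae : ⇑((L u - L u₀) v) =ᵐ[volume.restrict Ω] F := by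
      rw [ContinuousLinearMap.sub_apply]
      filter_upwards [Lp.coeFn_sub (L u v) (L u₀ v), hL u v, hL u₀ v] with x h1 h2 h3
      simp only [h1, Pi.sub_apply, h2, h3, hF]
    have hpt : ∀ᵐ x ∂(volume.restrict Ω), ‖F x‖ ≤ ‖(ε' * ‖v‖) • g x‖ := by
      filter_upwards [hδae, ae_restrict_mem hΩo.measurableSet] with x hx hxΩ
      have hxc : x ∈ closure Ω := subset_closure hxΩ
      have heu : extendC Ω u x = u ⟨x, hxc⟩ := by simp [extendC, hxc]
      have heu₀ : extendC Ω u₀ x = u₀ ⟨x, hxc⟩ := by simp [extendC, hxc]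
      have hev : extendC Ω v x = v ⟨x, hxc⟩ := by simp [extendC, hxc]
      have hdd : |u ⟨x, hxc⟩ - u₀ ⟨x, hxc⟩| ≤ dist u u₀ := by
        rw [← Real.dist_eq]
        exact ContinuousMap.dist_apply_le_dist _
      have habs : |u₀ ⟨x, hxc⟩| ≤ ‖u₀‖ := by
        have := ContinuousMap.norm_coe_le_norm u₀ ⟨x, hxc⟩
        rwa [Real.norm_eq_abs] at this
      rw [abs_le] at habs
      have hdd' := abs_le.1 hdd
      have hu₀K : u₀ ⟨x, hxc⟩ ∈ Set.Icc (-M) M :=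
        ⟨by simp only [hM]; linarith [habs.1], by simp only [hM]; linarith [habs.2]⟩
      have huK : u ⟨x, hxc⟩ ∈ Set.Icc (-M) M :=
        ⟨by simp only [hM]; linarith [habs.1, hdd'.1, hu1],
         by simp only [hM]; linarith [habs.2, hdd'.2, hu1]⟩
      have hkey := hx (u ⟨x, hxc⟩) huK (u₀ ⟨x, hxc⟩) hu₀K (le_trans hdd (le_of_lt hud))
      have hf' : |f' x (u ⟨x, hxc⟩) - f' x (u₀ ⟨x, hxc⟩)| ≤ ε' * g x := by
        have := abs_nonneg (f x (u ⟨x, hxc⟩) - f x (u₀ ⟨x, hxc⟩))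
        linarith
      have hvb : |v ⟨x, hxc⟩| ≤ ‖v‖ := by
        have := ContinuousMap.norm_coe_le_norm v ⟨x, hxc⟩
        rwa [Real.norm_eq_abs] at this
      have hFx : ‖F x‖ = |f' x (u ⟨x, hxc⟩) - f' x (u₀ ⟨x, hxc⟩)| * |v ⟨x, hxc⟩| := by
        rw [hF]
        simp only [heu, heu₀, hev, Real.norm_eq_abs, ← sub_mul, abs_mul]
      rw [hFx]
      have h1 : |f' x (u ⟨x, hxc⟩) - f' x (u₀ ⟨x, hxc⟩)| * |v ⟨x, hxc⟩| ≤
          (ε' * g x) * ‖v‖ := by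
        apply mul_le_mul hf' hvb (abs_nonneg _)
        have := abs_nonneg (f' x (u ⟨x, hxc⟩) - f' x (u₀ ⟨x, hxc⟩))
        linarith
      refine le_trans h1 ?_
      have : (ε' * g x) * ‖v‖ = ε' * ‖v‖ * g x := by ring
      rw [this]
      calc ε' * ‖v‖ * g x ≤ ε' * ‖v‖ * |g x| :=
            mul_le_mul_of_nonneg_left (le_abs_self _) (by positivity)
        _ ≤ ‖(ε' * ‖v‖) • g x‖ := by
            rw [smul_eq_mul, Real.norm_eq_abs, abs_mul, abs_of_nonneg (by positivity : (0:ℝ) ≤ ε' * ‖v‖)]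
    have hnorm : ‖(L u - L u₀) v‖ = (eLpNorm F p (volume.restrict Ω)).toReal := by
      rw [Lp.norm_def, eLpNorm_congr_ae hae]
    rw [hnorm]
    have hle : eLpNorm F p (volume.restrict Ω) ≤ eLpNorm ((ε' * ‖v‖) • g) p (volume.restrict Ω) := eLpNorm_mono_ae hpt
    have hsmul : eLpNorm ((ε' * ‖v‖) • g) p (volume.restrict Ω) = ‖ε' * ‖v‖‖₊ * eLpNorm g p (volume.restrict Ω) :=
      eLpNorm_const_smul _ _ p _
    have hfin : ‖ε' * ‖v‖‖₊ * eLpNorm g p (volume.restrict Ω) ≠ ⊤ :=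
      ENNReal.mul_ne_top ENNReal.coe_ne_top hg_mem.2.ne
    calc (eLpNorm F p (volume.restrict Ω)).toReal ≤ (‖ε' * ‖v‖‖₊ * eLpNorm g p (volume.restrict Ω)).toReal := by
          apply ENNReal.toReal_mono hfin
          rw [← hsmul]; exact hle
      _ = (ε' * ‖v‖) * G := by
          rw [ENNReal.toReal_mul, ENNReal.coe_toReal, coe_nnnorm, Real.norm_eq_abs,
            abs_of_nonneg (by positivity : (0:ℝ) ≤ ε' * ‖v‖)]
      _ = ε' * G * ‖v‖ := by ring
  refine lt_of_le_of_lt hop ?_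
  have h1 : ε' * G ≤ ε' * (G + 1) := by nlinarith
  have h2 : ε' * (G + 1) = ε / 2 := by
    rw [hε'def]; field_simp
  linarith
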